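/- Let ν ∈ (0,1) and set p = 1/ν. For every real x > 1, Σ_{k : kν ≥ 2} x^k / Γ(kν) ≤ (⌊p⌋ + 1) · x^{2p} · e^{x^p}, where the sum is over all integers k with kν ≥ 2. -/

import Mathlib

/-- Let `ν ∈ (0,1)`, `p = 1/ν`.  For every real `x > 1`,
`Σ_{k : kν ≥ 2} x^k / Γ(kν) ≤ (⌊p⌋ + 1) · x^(2p) · e^(x^p)`, the sum being over all
nonnegative integers `k` with `kν ≥ 2`. -/
theorem tail_sum_upper_bound (nu : ℝ) (hnu : nu ∈ Set.Ioo (0 : ℝ) 1)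
    (x : ℝ) (hx : 1 < x) :
    ∑' k : {k : ℕ // 2 ≤ (k : ℝ) * nu}, x ^ (k : ℕ) / Real.Gamma (((k : ℕ) : ℝ) * nu)
      ≤ ((⌊1 / nu⌋ : ℝ) + 1) * x ^ (2 * (1 / nu)) * Real.exp (x ^ (1 / nu)) := by
  obtain ⟨h0, h1⟩ := hnu
  set p : ℝ := 1 / nu with hpdef
  have hp1 : 1 < p := one_lt_one_div h0 h1
  have hp0 : 0 < p := by linarith
  have hx0 : 0 < x := lt_trans one_pos hx
  set y : ℝ := x ^ p with hydef
  have hy0 : 0 ≤ y := Real.rpow_nonneg hx0.le p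
  have hnup : nu * p = 1 := mul_one_div_cancel h0.ne'
  -- floor of p as natural
  have hfloor : ((⌊p⌋ : ℝ)) = (⌊p⌋₊ : ℝ) := (natCast_floor_eq_intCast_floor hp0.le).symm
  have hfl1 : 1 ≤ ⌊p⌋₊ := Nat.le_floor (by exact_mod_cast hp1.le)
  -- bound function
  set B : ℕ → ℝ := fun m => x ^ (2 * p) * (y ^ (m - 1) / (Nat.factorial (m - 1) : ℝ)) with hBdef
  have hB0 : ∀ m, 0 ≤ B m := by
    intro m
    have := Real.rpow_nonneg hx0.le (2 * p)
    positivity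
  set g : {k : ℕ // 2 ≤ (k : ℝ) * nu} → ℕ := fun k => ⌊((k : ℕ) : ℝ) * nu⌋₊ with hgdef
  -- basic facts about g
  have hg2 : ∀ k, 2 ≤ g k := fun k => Nat.le_floor (by exact_mod_cast k.2)
  -- termwise bound
  have hterm : ∀ k : {k : ℕ // 2 ≤ (k : ℝ) * nu},
      x ^ (k : ℕ) / Real.Gamma (((k : ℕ) : ℝ) * nu) ≤ B (g k) := by
    intro k
    set t : ℝ := ((k : ℕ) : ℝ) * nu with htdef
    have ht2 : (2 : ℝ) ≤ t := k.2
    set m : ℕ := g k with hmdef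
    have hm2 : 2 ≤ m := hg2 k
    have hmt : (m : ℝ) ≤ t := Nat.floor_le (by linarith)
    have htm : t < (m : ℝ) + 1 := Nat.lt_floor_add_one t
    -- Gamma lower bound
    have hGam : (Nat.factorial (m - 1) : ℝ) ≤ Real.Gamma t := by
      have h1 : Real.Gamma ((m : ℝ)) ≤ Real.Gamma t := by
        rcases eq_or_lt_of_le hmt with h | h
        · rw [h]
        · exact (Real.Gamma_strictMonoOn_Ici (Set.mem_Ici.mpr (by exact_mod_cast hm2))
            (Set.mem_Ici.mpr (le_trans (by exact_mod_cast hm2) hmt)) h).le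
      have h2 : Real.Gamma ((m : ℝ)) = (Nat.factorial (m - 1) : ℝ) := by
        have : (m : ℝ) = ((m - 1 : ℕ) : ℝ) + 1 := by
          rw [Nat.cast_sub (by omega : 1 ≤ m)]; ring
        rw [this, Real.Gamma_nat_eq_factorial]
      rw [← h2]; exact h1
    -- numerator bound
    have hk_eq : ((k : ℕ) : ℝ) = t * p := by
      rw [htdef, mul_assoc, hnup, mul_one]
    have hnum : x ^ (k : ℕ) ≤ x ^ (2 * p) * y ^ (m - 1) := by
      have e1 : x ^ (k : ℕ) = x ^ (((k : ℕ) : ℝ)) := (Real.rpow_natCast x _).symm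
      have e2 : x ^ (2 * p) * y ^ (m - 1) = x ^ (((m : ℝ) + 1) * p) := by
        rw [hydef, ← Real.rpow_natCast (x ^ p) (m - 1), ← Real.rpow_mul hx0.le,
          ← Real.rpow_add hx0]
        congr 1
        have : ((m - 1 : ℕ) : ℝ) = (m : ℝ) - 1 := by
          push_cast [Nat.cast_sub (by omega : 1 ≤ m)]; ring
        rw [this]; ring
      rw [e1, e2]
      apply Real.rpow_le_rpow_of_exponent_le hx.le
      rw [hk_eq]
      exact mul_le_mul_of_nonneg_right (by linarith) hp0.le
    have hGpos : (0 : ℝ) < (Nat.factorial (m - 1) : ℝ) := by positivity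
    calc x ^ (k : ℕ) / Real.Gamma t ≤ (x ^ (2 * p) * y ^ (m - 1)) / (Nat.factorial (m - 1) : ℝ) := by
          apply div_le_div₀ (by positivity) hnum hGpos hGam
      _ = B m := by rw [hBdef]; ring
  -- RHS nonneg
  have hRHS0 : 0 ≤ ((⌊p⌋ : ℝ) + 1) * x ^ (2 * p) * Real.exp y := by
    rw [hfloor]
    have := Real.rpow_nonneg hx0.le (2 * p)
    positivity
  refine tsum_le_of_sum_le' hRHS0 (fun S => ?_)
  classical
  -- fiber cardinality bound
  have hcard : ∀ m : ℕ, (S.filter (fun k => g k = m)).card ≤ ⌊p⌋₊ + 1 := by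
    intro m
    set c : ℕ := ⌈(m : ℝ) * p⌉₊ with hcdef
    have : (S.filter (fun k => g k = m)).card ≤ (Finset.Icc c (c + ⌊p⌋₊)).card := by
      refine Finset.card_le_card_of_injOn (fun k => (k : ℕ)) ?_ ?_
      · intro k hk
        simp only [Finset.mem_coe, Finset.mem_filter] at hk
        obtain ⟨_, hgk⟩ := hk
        set t : ℝ := ((k : ℕ) : ℝ) * nu with htdef
        have ht0 : 0 ≤ t := le_trans (by norm_num) k.2
        have hmt : (m : ℝ) ≤ t := by rw [← hgk]; exact Nat.floor_le ht0
        have htm : t < (m : ℝ) + 1 := by rw [← hgk]; exact Nat.lt_floor_add_one t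
        have hk_eq : ((k : ℕ) : ℝ) = t * p := by rw [htdef, mul_assoc, hnup, mul_one]
        rw [Finset.mem_coe, Finset.mem_Icc]
        constructor
        · show c ≤ (k : ℕ)
          exact Nat.ceil_le.mpr (by rw [hk_eq]; exact mul_le_mul_of_nonneg_right hmt hp0.le)
        · have h1 : ((k : ℕ) : ℝ) ≤ p + (c : ℝ) := by
            have : ((k : ℕ) : ℝ) < ((m : ℝ) + 1) * p :=
              hk_eq ▸ mul_lt_mul_of_pos_right htm hp0 |>.trans_le le_rfl
            have h2 : (m : ℝ) * p ≤ (c : ℝ) := Nat.le_ceil _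
            nlinarith
          show (k : ℕ) ≤ c + ⌊p⌋₊
          have h2 := Nat.le_floor h1
          rwa [Nat.floor_add_natCast hp0.le, add_comm] at h2
      · intro a _ b _ hab
        exact Subtype.ext hab
    rw [Nat.card_Icc] at this
    omega
  -- main finite sum estimate
  calc ∑ k ∈ S, x ^ (k : ℕ) / Real.Gamma (((k : ℕ) : ℝ) * nu)
      ≤ ∑ k ∈ S, B (g k) := Finset.sum_le_sum (fun k _ => hterm k)
    _ = ∑ m ∈ S.image g, (S.filter (fun k => g k = m)).card • B m := Finset.sum_comp B g
    _ ≤ ∑ m ∈ S.image g, (⌊p⌋₊ + 1) • B m := by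
        apply Finset.sum_le_sum
        intro m _
        exact nsmul_le_nsmul_left (hB0 m) (hcard m)
    _ = ((⌊p⌋₊ : ℝ) + 1) * (x ^ (2 * p) * ∑ m ∈ S.image g, y ^ (m - 1) / (Nat.factorial (m - 1) : ℝ)) := by
        simp only [nsmul_eq_mul, hBdef]
        rw [Finset.mul_sum, Finset.mul_sum]
        congr 1; ext m; push_cast; ring
    _ ≤ ((⌊p⌋₊ : ℝ) + 1) * (x ^ (2 * p) * Real.exp y) := by
        apply mul_le_mul_of_nonneg_left _ (by positivity)
        apply mul_le_mul_of_nonneg_left _ (Real.rpow_nonneg hx0.le _)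
        -- reindex by n = m - 1
        have hinj : Set.InjOn (fun m : ℕ => m - 1) (S.image g : Set ℕ) := by
          intro a ha b hb hab
          simp only [Finset.coe_image, Set.mem_image] at ha hb
          obtain ⟨ka, _, hka⟩ := ha
          obtain ⟨kb, _, hkb⟩ := hb
          have ha2 : 2 ≤ a := hka ▸ hg2 ka
          have hb2 : 2 ≤ b := hkb ▸ hg2 kb
          have hab' : a - 1 = b - 1 := hab
          omega
        rw [← Finset.sum_image (g := fun m : ℕ => m - 1) (f := fun n => y ^ n / (Nat.factorial n : ℝ))
          (fun a ha b hb hab => hinj ha hb hab)]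
        set U : Finset ℕ := (S.image g).image (fun m => m - 1) with hU
        calc ∑ n ∈ U, y ^ n / (Nat.factorial n : ℝ)
            ≤ ∑ n ∈ Finset.range (U.sup id + 1), y ^ n / (Nat.factorial n : ℝ) := by
              apply Finset.sum_le_sum_of_subset_of_nonneg
              · intro n hn
                rw [Finset.mem_range]
                exact Nat.lt_succ_of_le (Finset.le_sup (f := id) hn)
              · intro n _ _; positivity
          _ ≤ Real.exp y := Real.sum_le_exp_of_nonneg hy0 _
    _ = ((⌊p⌋ : ℝ) + 1) * x ^ (2 * p) * Real.exp y := by rw [hfloor]; ring
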